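/- Main Convergence Law: let q > p > 1 be real and define the bias-corrected estimator B_n^{(p,q)} = ζ(p)^{q/p} − D_n^{(p,q)} − (q/p) ζ(p)^{q/p − 1} (ζ(p) − S_n^{(p)}). Then B_n^{(p,q)} − ζ(q) = O(n^{-min(2p−2, q−1)}) as n → ∞; that is, there exist C > 0 and N such that |B_n^{(p,q)} − ζ(q)| ≤ C n^{-min(2p−2, q−1)} for all n ≥ N. -/

import Mathlib

open Filter Finset

/-- Partial sum `S_n^{(p)} = ∑_{k=1}^n k^{-p}`. -/
noncomputable def S (p : ℝ) (n : ℕ) : ℝ := ∑ k ∈ Finset.range n, ((k : ℝ) + 1) ^ (-p)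

/-- `ζ(s) = ∑_{k=1}^∞ k^{-s}` (as a tsum). -/
noncomputable def zetaR (s : ℝ) : ℝ := ∑' k : ℕ, ((k : ℝ) + 1) ^ (-s)

/-- Finite deficiency `D_n^{(p,q)} = (S_n^{(p)})^{q/p} - T_n^{(q)}`. -/
noncomputable def D (p q : ℝ) (n : ℕ) : ℝ := (S p n) ^ (q / p) - S q n

lemma summable_aux {s : ℝ} (hs : 1 < s) :
    Summable (fun k : ℕ => ((k : ℝ) + 1) ^ (-s)) := by
  have h := (Real.summable_one_div_nat_add_rpow 1 s).2 hs
  refine h.congr fun k => ?_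
  have hk : (0:ℝ) < (k:ℝ) + 1 := by positivity
  rw [abs_of_pos hk, Real.rpow_neg hk.le, one_div]

lemma key_ineq {s : ℝ} (hs : 1 < s) {b : ℝ} (hb : 1 ≤ b) :
    (b + 1) ^ (-s) ≤ (b ^ (1 - s) - (b + 1) ^ (1 - s)) / (s - 1) := by
  have hb0 : (0:ℝ) < b := by linarith
  have hb1 : (0:ℝ) < b + 1 := by linarith
  have hA : (0:ℝ) < (b + 1) ^ (-s) := Real.rpow_pos_of_pos hb1 _
  -- Bernoulli : 1 + s * (1/b) ≤ (1 + 1/b) ^ s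
  have hB : 1 + s * (1 / b) ≤ (1 + 1 / b) ^ s := by
    refine one_add_mul_self_le_rpow_one_add ?_ hs.le
    have : (0:ℝ) < 1 / b := by positivity
    linarith
  have h1 : b ^ (1 - s) = b * b ^ (-s) := by
    rw [show (1 - s) = 1 + (-s) by ring, Real.rpow_add hb0, Real.rpow_one]
  have h2 : (b + 1) ^ (1 - s) = (b + 1) * (b + 1) ^ (-s) := by
    rw [show (1 - s) = 1 + (-s) by ring, Real.rpow_add hb1, Real.rpow_one]
  have h3 : b ^ (-s) = (1 + 1 / b) ^ s * (b + 1) ^ (-s) := by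
    have e : (1 + 1 / b) = (b + 1) / b := by field_simp
    rw [e, Real.div_rpow hb1.le hb0.le, Real.rpow_neg hb1.le, Real.rpow_neg hb0.le]
    have hbs : (0:ℝ) < b ^ s := Real.rpow_pos_of_pos hb0 _
    have hbs1 : (0:ℝ) < (b + 1) ^ s := Real.rpow_pos_of_pos hb1 _
    field_simp
  have hkey : (s - 1) * (b + 1) ^ (-s) ≤ b ^ (1 - s) - (b + 1) ^ (1 - s) := by
    rw [h1, h2, h3]
    have hmul : (1 + s * (1 / b)) * (b * (b + 1) ^ (-s)) ≤
        (1 + 1 / b) ^ s * (b * (b + 1) ^ (-s)) := by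
      apply mul_le_mul_of_nonneg_right hB (by positivity)
    have he : (1 + s * (1 / b)) * (b * (b + 1) ^ (-s)) = (b + s) * (b + 1) ^ (-s) := by
      field_simp
    nlinarith [hmul, he]
  rw [le_div_iff₀ (by linarith : (0:ℝ) < s - 1)]
  nlinarith [hkey]

lemma S_tail {s : ℝ} (hs : 1 < s) {n : ℕ} (hn : 1 ≤ n) :
    0 ≤ zetaR s - S s n ∧ zetaR s - S s n ≤ (n : ℝ) ^ (1 - s) / (s - 1) := by
  have hf := summable_aux hs
  have htail : zetaR s - S s n = ∑' k : ℕ, (((k + n : ℕ) : ℝ) + 1) ^ (-s) := by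
    have h := Summable.sum_add_tsum_nat_add (f := fun k : ℕ => ((k : ℝ) + 1) ^ (-s)) n hf
    unfold zetaR S
    push_cast at h ⊢
    linarith
  have hn1 : (1:ℝ) ≤ (n:ℝ) := by exact_mod_cast hn
  constructor
  · rw [htail]
    exact tsum_nonneg fun k => Real.rpow_nonneg (by positivity) _
  · rw [htail]
    apply Real.tsum_le_of_sum_range_le (fun k => Real.rpow_nonneg (by positivity) _)
    intro m
    set h : ℕ → ℝ := fun i => ((n : ℝ) + i) ^ (1 - s) / (s - 1) with hh
    have hstep : ∀ i : ℕ, (((i + n : ℕ) : ℝ) + 1) ^ (-s) ≤ h i - h (i + 1) := by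
      intro i
      have hb : (1:ℝ) ≤ (n : ℝ) + i := by
        have : (0:ℝ) ≤ (i:ℝ) := by positivity
        linarith
      have := key_ineq hs hb
      have e1 : (((i + n : ℕ) : ℝ) + 1) = ((n:ℝ) + i) + 1 := by push_cast; ring
      have e2 : ((n : ℝ) + ((i:ℕ) + 1 : ℕ)) = ((n:ℝ) + i) + 1 := by push_cast; ring
      rw [e1, hh]
      simp only [e2]
      rw [div_sub_div_same]
      exact this
    calc ∑ i ∈ Finset.range m, (((i + n : ℕ) : ℝ) + 1) ^ (-s)
        ≤ ∑ i ∈ Finset.range m, (h i - h (i + 1)) :=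
          Finset.sum_le_sum fun i _ => hstep i
      _ = h 0 - h m := Finset.sum_range_sub' h m
      _ ≤ h 0 := by
          have : 0 ≤ h m := by
            apply div_nonneg (Real.rpow_nonneg (by positivity) _) (by linarith)
          linarith
      _ = (n : ℝ) ^ (1 - s) / (s - 1) := by simp [hh]

lemma taylor_bound {α a x : ℝ} (hα : 1 < α) (hx : 1 ≤ x) (hxa : x ≤ a) :
    |a ^ α - x ^ α - α * a ^ (α - 1) * (a - x)| ≤
      (α * (α - 1) * (1 + a ^ (α - 2))) * (a - x) ^ 2 := by
  have ha1 : (1:ℝ) ≤ a := le_trans hx hxa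
  have ha0 : (0:ℝ) < a := by linarith
  set M : ℝ := α * (α - 1) * (1 + a ^ (α - 2)) with hM
  have hM0 : 0 ≤ M := by
    apply mul_nonneg (mul_nonneg (by linarith) (by linarith))
    have := Real.rpow_nonneg ha0.le (α - 2)
    linarith
  -- Step 1: for y ∈ Icc x a, |α * y^(α-1) - α * a^(α-1)| ≤ M * (a - x)
  have step1 : ∀ y ∈ Set.Icc x a, |α * y ^ (α - 1) - α * a ^ (α - 1)| ≤ M * (a - x) := by
    intro y hy
    obtain ⟨hy1, hy2⟩ := hy
    have hder : ∀ z ∈ Set.Icc x a,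
        HasDerivWithinAt (fun w : ℝ => α * w ^ (α - 1)) (α * ((α - 1) * z ^ (α - 2)))
          (Set.Icc x a) z := by
      intro z hz
      have hz0 : z ≠ 0 := by have := hz.1; intro h; rw [h] at this; linarith
      have := ((Real.hasDerivAt_rpow_const (p := α - 1) (Or.inl hz0)).const_mul α)
      have e : α - 1 - 1 = α - 2 := by ring
      rw [e] at this
      exact this.hasDerivWithinAt
    have hbound : ∀ z ∈ Set.Icc x a, ‖α * ((α - 1) * z ^ (α - 2))‖ ≤ M := by
      intro z hz
      have hz1 : (1:ℝ) ≤ z := le_trans hx hz.1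
      have hz0 : (0:ℝ) < z := by linarith
      have hze : z ^ (α - 2) ≤ 1 + a ^ (α - 2) := by
        rcases le_or_gt 2 α with h2 | h2
        · have : z ^ (α - 2) ≤ a ^ (α - 2) :=
            Real.rpow_le_rpow hz0.le (le_trans hz.2 le_rfl) (by linarith)
          linarith
        · have : z ^ (α - 2) ≤ 1 := Real.rpow_le_one_of_one_le_of_nonpos hz1 (by linarith)
          have := Real.rpow_nonneg ha0.le (α - 2)
          linarith
      have hnn : 0 ≤ α * ((α - 1) * z ^ (α - 2)) :=
        mul_nonneg (by linarith) (mul_nonneg (by linarith) (Real.rpow_nonneg hz0.le _))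
      rw [Real.norm_eq_abs, abs_of_nonneg hnn]
      rw [hM]
      have h1 : 0 ≤ α * (α - 1) := mul_nonneg (by linarith) (by linarith)
      nlinarith [Real.rpow_nonneg hz0.le (α - 2)]
    have := (convex_Icc x a).norm_image_sub_le_of_norm_hasDerivWithin_le hder hbound
      (Set.right_mem_Icc.2 hxa) ⟨hy1, hy2⟩
    rw [Real.norm_eq_abs, Real.norm_eq_abs] at this
    calc |α * y ^ (α - 1) - α * a ^ (α - 1)| ≤ M * |y - a| := this
      _ ≤ M * (a - x) := by
          apply mul_le_mul_of_nonneg_left _ hM0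
          rw [abs_sub_comm, abs_of_nonneg (by linarith)]
          linarith
  -- Step 2: g y = y^α - α a^(α-1) y
  have step2 : ∀ z ∈ Set.Icc x a,
      HasDerivWithinAt (fun w : ℝ => w ^ α - α * a ^ (α - 1) * w)
        (α * z ^ (α - 1) - α * a ^ (α - 1)) (Set.Icc x a) z := by
    intro z hz
    have hz0 : z ≠ 0 := by have := hz.1; intro h; rw [h] at this; linarith
    have h1 := Real.hasDerivAt_rpow_const (p := α) (Or.inl hz0)
    have h2 : HasDerivAt (fun w : ℝ => α * a ^ (α - 1) * w) (α * a ^ (α - 1)) z := by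
      simpa using (hasDerivAt_id z).const_mul (α * a ^ (α - 1))
    exact (h1.sub h2).hasDerivWithinAt
  have main := (convex_Icc x a).norm_image_sub_le_of_norm_hasDerivWithin_le step2
    (fun z hz => by rw [Real.norm_eq_abs]; exact step1 z hz)
    (Set.left_mem_Icc.2 hxa) (Set.right_mem_Icc.2 hxa)
  rw [Real.norm_eq_abs, Real.norm_eq_abs] at main
  have e : (a ^ α - α * a ^ (α - 1) * a) - (x ^ α - α * a ^ (α - 1) * x)
      = a ^ α - x ^ α - α * a ^ (α - 1) * (a - x) := by ring
  rw [e] at main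
  rw [abs_of_nonneg (by linarith : (0:ℝ) ≤ a - x)] at main
  calc |a ^ α - x ^ α - α * a ^ (α - 1) * (a - x)| ≤ M * (a - x) * (a - x) := main
    _ = M * (a - x) ^ 2 := by ring

theorem stmt13 (p q : ℝ) (hp : 1 < p) (hpq : p < q) :
    ∃ C > (0 : ℝ), ∃ N : ℕ, ∀ n ≥ N,
      |(zetaR p ^ (q / p) - D p q n -
        (q / p) * zetaR p ^ (q / p - 1) * (zetaR p - S p n)) - zetaR q| ≤
        C * (n : ℝ) ^ (-(min (2 * p - 2) (q - 1))) := by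
  have hq : 1 < q := lt_trans hp hpq
  have hp0 : (0:ℝ) < p := by linarith
  set α : ℝ := q / p with hαdef
  have hα : 1 < α := (one_lt_div hp0).2 hpq
  -- 1 ≤ S p n for n ≥ 1
  have hS1 : ∀ n : ℕ, 1 ≤ n → 1 ≤ S p n := by
    intro n hn
    unfold S
    have h0 : (0:ℕ) ∈ Finset.range n := Finset.mem_range.2 hn
    have := Finset.single_le_sum (f := fun k : ℕ => ((k : ℝ) + 1) ^ (-p))
      (fun k _ => Real.rpow_nonneg (by positivity) _) h0
    simpa using this
  have ha1 : 1 ≤ zetaR p := by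
    have h := (S_tail hp (le_refl 1)).1
    have := hS1 1 le_rfl
    linarith
  have ha0 : (0:ℝ) < zetaR p := by linarith
  set a : ℝ := zetaR p with hadef
  set M : ℝ := α * (α - 1) * (1 + a ^ (α - 2)) with hMdef
  have hM0 : 0 ≤ M := by
    apply mul_nonneg (mul_nonneg (by linarith) (by linarith))
    have := Real.rpow_nonneg ha0.le (α - 2)
    linarith
  refine ⟨M / (p - 1) ^ 2 + 1 / (q - 1), ?_, 1, ?_⟩
  · have h1 : 0 ≤ M / (p - 1) ^ 2 := div_nonneg hM0 (by positivity)
    have h2 : 0 < 1 / (q - 1) := one_div_pos.2 (by linarith)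
    linarith
  intro n hn
  have hn1 : (1:ℝ) ≤ (n:ℝ) := by exact_mod_cast hn
  have hn0 : (0:ℝ) < (n:ℝ) := by linarith
  obtain ⟨hr0, hr1⟩ := S_tail hp hn
  obtain ⟨ht0, ht1⟩ := S_tail hq hn
  have hSx : 1 ≤ S p n := hS1 n hn
  have hSa : S p n ≤ a := by rw [hadef]; linarith
  have hE1 := taylor_bound hα hSx hSa
  -- rewrite the expression
  have hexpr : (zetaR p ^ (q / p) - D p q n -
      (q / p) * zetaR p ^ (q / p - 1) * (zetaR p - S p n)) - zetaR q
      = (a ^ α - (S p n) ^ α - α * a ^ (α - 1) * (a - S p n)) - (zetaR q - S q n) := by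
    unfold D
    rw [← hadef, ← hαdef]
    ring
  rw [hexpr]
  set r : ℝ := a - S p n with hrdef
  set t : ℝ := zetaR q - S q n with htdef
  have habs : |(a ^ α - (S p n) ^ α - α * a ^ (α - 1) * r) - t|
      ≤ M * r ^ 2 + t := by
    have := abs_sub (a ^ α - (S p n) ^ α - α * a ^ (α - 1) * r) t
    have ht : |t| = t := abs_of_nonneg ht0
    calc |(a ^ α - (S p n) ^ α - α * a ^ (α - 1) * r) - t|
        ≤ |a ^ α - (S p n) ^ α - α * a ^ (α - 1) * r| + |t| := abs_sub _ _
      _ ≤ M * r ^ 2 + t := by rw [ht]; exact add_le_add hE1 le_rfl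
  refine le_trans habs ?_
  -- bound M * r^2 + t by the rpow expression
  set m : ℝ := min (2 * p - 2) (q - 1) with hm
  have hb1 : (n:ℝ) ^ (-(2 * p - 2)) ≤ (n:ℝ) ^ (-m) :=
    Real.rpow_le_rpow_of_exponent_le hn1
      (by have := min_le_left (2 * p - 2) (q - 1); rw [hm]; linarith)
  have hb2 : (n:ℝ) ^ (-(q - 1)) ≤ (n:ℝ) ^ (-m) :=
    Real.rpow_le_rpow_of_exponent_le hn1
      (by have := min_le_right (2 * p - 2) (q - 1); rw [hm]; linarith)
  have hr2 : r ^ 2 ≤ ((n:ℝ) ^ (1 - p) / (p - 1)) ^ 2 := by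
    apply pow_le_pow_left₀ hr0 hr1
  have hsq : ((n:ℝ) ^ (1 - p)) ^ 2 = (n:ℝ) ^ (-(2 * p - 2)) := by
    rw [← Real.rpow_natCast ((n:ℝ) ^ (1 - p)) 2, ← Real.rpow_mul hn0.le]
    congr 1
    push_cast
    ring
  have e1q : (n:ℝ) ^ (1 - q) = (n:ℝ) ^ (-(q - 1)) := by congr 1; ring
  calc M * r ^ 2 + t
      ≤ M * ((n:ℝ) ^ (1 - p) / (p - 1)) ^ 2 + (n:ℝ) ^ (1 - q) / (q - 1) :=
        add_le_add (mul_le_mul_of_nonneg_left hr2 hM0) ht1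
    _ = M / (p - 1) ^ 2 * (n:ℝ) ^ (-(2 * p - 2)) + 1 / (q - 1) * (n:ℝ) ^ (-(q - 1)) := by
        rw [div_pow, hsq, e1q]; ring
    _ ≤ M / (p - 1) ^ 2 * (n:ℝ) ^ (-m) + 1 / (q - 1) * (n:ℝ) ^ (-m) :=
        add_le_add (mul_le_mul_of_nonneg_left hb1 (div_nonneg hM0 (by positivity)))
          (mul_le_mul_of_nonneg_left hb2 (le_of_lt (one_div_pos.2 (by linarith))))
    _ = (M / (p - 1) ^ 2 + 1 / (q - 1)) * (n:ℝ) ^ (-m) := by ring
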